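/- For every α ∈ [0,∞), the set {x ∈ (0,1) : λ(x) ≤ α} is of the first Baire category (meagre) in (0,1). -/

import Mathlib

open Filter MeasureTheory Set
open scoped ENNReal NNReal

/-- The Engel series map `T(x) = x⌈1/x⌉ - 1`, with `T(0) = 0`. -/
noncomputable def engelT (x : ℝ) : ℝ := if x = 0 then 0 else x * (⌈x⁻¹⌉ : ℝ) - 1

/-- The `n`-th Engel digit `d_n(x) = ⌈1/(T^{n-1} x)⌉` (for `n ≥ 1`);
it equals `0` when the Engel expansion of `x` has terminated. -/
noncomputable def engelDigit (n : ℕ) (x : ℝ) : ℕ := ⌈(engelT^[n - 1] x)⁻¹⌉₊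

/-- The exponent of convergence `λ(x) = inf {s ≥ 0 : Σ_{n≥1} d_n(x)^{-s} < ∞}`,
 valued in `[0,∞]` (with `inf ∅ = ∞`). -/
noncomputable def engelLambda (x : ℝ) : ℝ≥0∞ :=
  sInf (ENNReal.ofReal ''
    {s : ℝ | 0 ≤ s ∧ Summable fun n : ℕ => ((engelDigit (n + 1) x : ℝ)) ^ (-s)})

/-- `D(x) = liminf_n (log d_n(x))/(log n)`, valued in `[0,∞]`. -/
noncomputable def engelDexp (x : ℝ) : ℝ≥0∞ :=
  Filter.liminf (fun n : ℕ =>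
    ENNReal.ofReal (Real.log (engelDigit n x) / Real.log n)) Filter.atTop

lemma engelT_zero : engelT 0 = 0 := if_pos rfl

lemma engelT_iterate_zero (m : ℕ) : engelT^[m] (0:ℝ) = 0 := by
  induction m with
  | zero => rfl
  | succ m ih => rw [Function.iterate_succ_apply, engelT_zero, ih]

lemma engelT_branch {r : ℕ} (hr : 2 ≤ r) {x : ℝ}
    (hx1 : 1/(r:ℝ) < x) (hx2 : x < 1/((r:ℝ)-1)) : engelT x = r * x - 1 := by
  have hr1 : (1:ℝ) < r := by exact_mod_cast hr
  have hr0 : (0:ℝ) < r := by linarith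
  have hrm : (0:ℝ) < (r:ℝ) - 1 := by linarith
  have hx0 : 0 < x := lt_trans (by positivity) hx1
  have h1 : x⁻¹ < r := by
    rw [← one_div]
    calc 1/x < 1/(1/(r:ℝ)) := by
          apply one_div_lt_one_div_of_lt (by positivity) hx1
      _ = r := one_div_one_div _
  have h2 : (r:ℝ) - 1 < x⁻¹ := by
    rw [← one_div]
    calc (r:ℝ) - 1 = 1/(1/((r:ℝ)-1)) := (one_div_one_div _).symm
      _ < 1/x := one_div_lt_one_div_of_lt hx0 hx2
  have hceil : ⌈x⁻¹⌉ = (r:ℤ) := by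
    rw [Int.ceil_eq_iff]
    constructor <;> push_cast <;> linarith
  rw [engelT, if_neg hx0.ne', hceil]
  push_cast; ring

lemma engelT_mem {x : ℝ} (hx : x ∈ Ioo (0:ℝ) 1) : engelT x ∈ Ico 0 x := by
  have hx0 := hx.1
  have hle : x⁻¹ ≤ (⌈x⁻¹⌉:ℝ) := Int.le_ceil _
  have hlt : (⌈x⁻¹⌉:ℝ) < x⁻¹ + 1 := Int.ceil_lt_add_one _
  have hinv : x * x⁻¹ = 1 := mul_inv_cancel₀ hx0.ne'
  rw [engelT, if_neg hx0.ne']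
  constructor
  · nlinarith [mul_le_mul_of_nonneg_left hle hx0.le]
  · nlinarith [mul_lt_mul_of_pos_left hlt hx0]

lemma engelT_orbit (m : ℕ) : ∀ x : ℝ, x ∈ Ioo (0:ℝ) 1 → 0 < engelT^[m] x →
    ∀ n ≤ m, engelT^[m] x ≤ engelT^[n] x ∧ engelT^[n] x < 1 := by
  induction m with
  | zero =>
    intro x hx _ n hn
    obtain rfl : n = 0 := Nat.le_zero.mp hn
    exact ⟨le_refl _, hx.2⟩
  | succ m ih =>
    intro x hx hpos n hn
    have hT : engelT x ∈ Ico 0 x := engelT_mem hx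
    have hTpos : 0 < engelT x := by
      rcases eq_or_lt_of_le hT.1 with h | h
      · exfalso
        rw [Function.iterate_succ_apply, ← h, engelT_iterate_zero] at hpos
        exact lt_irrefl 0 hpos
      · exact h
    have hTx : engelT x ∈ Ioo (0:ℝ) 1 := ⟨hTpos, lt_trans hT.2 hx.2⟩
    have hpos' : 0 < engelT^[m] (engelT x) := by
      rw [← Function.iterate_succ_apply]; exact hpos
    rcases n with _ | n'
    · refine ⟨?_, hx.2⟩
      have h0 := (ih (engelT x) hTx hpos' 0 (Nat.zero_le _)).1
      simp only [Function.iterate_zero_apply] at h0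
      rw [Function.iterate_succ_apply]
      calc engelT^[m] (engelT x) ≤ engelT x := h0
        _ ≤ x := hT.2.le
    · have hn' : n' ≤ m := Nat.succ_le_succ_iff.mp hn
      rw [Function.iterate_succ_apply, Function.iterate_succ_apply]
      exact ih (engelT x) hTx hpos' n' hn'

lemma engelT_stay {q : ℕ} (hq : 2 ≤ q) : ∀ (j : ℕ) (y : ℝ),
    1/(q:ℝ) - (1/((q:ℝ)+1))^j * (1/((q:ℝ)*((q:ℝ)+1))) < y → y < 1/(q:ℝ) →
    ∀ i ≤ j, engelT^[i] y ∈ Ioo (1/((q:ℝ)+1)) (1/(q:ℝ)) := by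
  have hQ : (2:ℝ) ≤ (q:ℝ) := by exact_mod_cast hq
  have hQ0 : (0:ℝ) < q := by linarith
  have hQ1 : (0:ℝ) < (q:ℝ) + 1 := by linarith
  have hid : 1/((q:ℝ)+1) = 1/(q:ℝ) - 1/((q:ℝ)*((q:ℝ)+1)) := by
    field_simp
    ring
  intro j
  induction j with
  | zero =>
    intro y h1 h2 i hi
    obtain rfl : i = 0 := Nat.le_zero.mp hi
    simp only [Function.iterate_zero_apply]
    refine ⟨?_, h2⟩
    rw [pow_zero, one_mul] at h1
    linarith
  | succ j ih =>
    intro y h1 h2 i hi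
    have hpowle : (1/((q:ℝ)+1))^(j+1) ≤ 1 := by
      apply pow_le_one₀ (by positivity)
      rw [div_le_one hQ1]; linarith
    have hβ : (0:ℝ) < 1/((q:ℝ)*((q:ℝ)+1)) := by positivity
    have hmem : y ∈ Ioo (1/((q:ℝ)+1)) (1/(q:ℝ)) := by
      refine ⟨?_, h2⟩
      rw [hid]
      nlinarith
    rcases i with _ | i'
    · simpa using hmem
    · have hi' : i' ≤ j := Nat.succ_le_succ_iff.mp hi
      have hTy : engelT y = ((q:ℝ)+1)*y - 1 := by
        have := engelT_branch (r := q+1) (by omega) (x := y) (by push_cast; exact hmem.1)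
          (by push_cast; simpa using hmem.2)
        rw [this]; push_cast; ring
      have hkey : ((q:ℝ)+1) * (1/((q:ℝ)+1))^(j+1) = (1/((q:ℝ)+1))^j := by
        rw [pow_succ]
        field_simp
      have h1' : 1/(q:ℝ) - (1/((q:ℝ)+1))^j * (1/((q:ℝ)*((q:ℝ)+1))) < engelT y := by
        rw [hTy]
        have hmul := mul_lt_mul_of_pos_left h1 hQ1
        have hexp : ((q:ℝ)+1) * (1/(q:ℝ)) = 1 + 1/(q:ℝ) := by field_simp
        nlinarith
      have h2' : engelT y < 1/(q:ℝ) := by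
        rw [hTy]
        have hmul := mul_lt_mul_of_pos_left h2 hQ1
        have hexp : ((q:ℝ)+1) * (1/(q:ℝ)) = 1 + 1/(q:ℝ) := by field_simp
        nlinarith
      rw [Function.iterate_succ_apply]
      exact ih (engelT y) h1' h2' i' hi'

/-- If `(a,b)` contains a full fundamental interval, we are done with `m = 0`. -/
lemma expansion_done {a b : ℝ} {q : ℕ} (hq : 2 ≤ q) (ha : a < 1/((q:ℝ)+1)) (hb : 1/(q:ℝ) < b) :
    ∃ (m q' : ℕ), 2 ≤ q' ∧ ∀ u v : ℝ, 1/((q':ℝ)+1) ≤ u → u < v → v ≤ 1/(q':ℝ) →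
      ∃ J : Set ℝ, IsOpen J ∧ J.Nonempty ∧ J ⊆ Set.Ioo a b ∧
        ∀ x ∈ J, engelT^[m] x ∈ Set.Ioo u v := by
  refine ⟨0, q, hq, fun u v hu huv hv => ⟨Ioo u v, isOpen_Ioo, nonempty_Ioo.2 huv, ?_,
    fun x hx => by simpa using hx⟩⟩
  intro x hx
  exact ⟨lt_of_lt_of_le ha (le_trans hu hx.1.le), lt_of_le_of_lt (hx.2.le.trans hv) hb⟩

lemma expansion (n : ℕ) : ∀ a b : ℝ, 0 ≤ a → a < b → b ≤ 1 → 1 ≤ (6/5:ℝ)^n * (b - a) →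
    ∃ (m q : ℕ), 2 ≤ q ∧ ∀ u v : ℝ, 1/((q:ℝ)+1) ≤ u → u < v → v ≤ 1/(q:ℝ) →
      ∃ J : Set ℝ, IsOpen J ∧ J.Nonempty ∧ J ⊆ Set.Ioo a b ∧
        ∀ x ∈ J, engelT^[m] x ∈ Set.Ioo u v := by
  induction n with
  | zero =>
    intro a b ha hab hb h1
    rw [pow_zero, one_mul] at h1
    refine expansion_done (q := 2) le_rfl ?_ ?_ <;> push_cast <;> linarith
  | succ n ih =>
    intro a b ha hab hb h1
    by_cases hA : ∃ q : ℕ, 2 ≤ q ∧ a < 1/((q:ℝ)+1) ∧ 1/(q:ℝ) < b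
    · obtain ⟨q, hq, h1, h2⟩ := hA
      exact expansion_done hq h1 h2
    · push_neg at hA
      -- hA : ∀ q, 2 ≤ q → a < 1/(q+1) → b ≤ 1/q
      have hb0 : 0 < b := lt_of_le_of_lt ha hab
      -- find minimal p ≥ 2 with 1/p < b
      have hex : ∃ q : ℕ, 2 ≤ q ∧ 1/(q:ℝ) < b := by
        obtain ⟨t, ht⟩ := exists_nat_gt (1/b)
        refine ⟨max t 2, le_max_right _ _, ?_⟩
        have htm : (1/b : ℝ) < (max t 2 : ℕ) := lt_of_lt_of_le ht (by exact_mod_cast Nat.le_max_left t 2)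
        have hm0 : (0:ℝ) < ((max t 2 : ℕ):ℝ) := by positivity
        calc (1:ℝ)/(max t 2 : ℕ) < 1/(1/b) := one_div_lt_one_div_of_lt (by positivity) htm
          _ = b := one_div_one_div b
      classical
      let p := Nat.find hex
      obtain ⟨hp2, hpb⟩ : 2 ≤ p ∧ 1/(p:ℝ) < b := Nat.find_spec hex
      have hP2 : (2:ℝ) ≤ (p:ℝ) := by exact_mod_cast hp2
      have hp0 : (0:ℝ) < p := by linarith
      have hbp : b ≤ 1/((p:ℝ)-1) := by
        rcases eq_or_lt_of_le hp2 with h | h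
        · have : ((p:ℝ)) = 2 := by exact_mod_cast h.symm
          rw [this]; norm_num; linarith
        · have hmin := Nat.find_min hex (show p - 1 < p by omega)
          push_neg at hmin
          have h2p : 2 ≤ p - 1 := by omega
          have := hmin h2p
          have hcast : ((p - 1 : ℕ):ℝ) = (p:ℝ) - 1 := by
            have : 1 ≤ p := by omega
            push_cast [Nat.cast_sub this]; ring
          rw [hcast] at this
          exact this
      have hap1 : 1/((p:ℝ)+1) ≤ a := by
        by_contra hcon
        push_neg at hcon
        exact absurd (hA p hp2 hcon) (not_le.mpr hpb)
      -- select the branch r and the overlap (a', b')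
      have hsel : ∃ (r : ℕ) (a' b' : ℝ), 2 ≤ r ∧ 1/(r:ℝ) ≤ a' ∧ b' ≤ 1/((r:ℝ)-1) ∧
          a ≤ a' ∧ b' ≤ b ∧ a' < b' ∧ (6/5:ℝ)*(b-a) ≤ (r:ℝ)*(b'-a') := by
        by_cases hap : 1/(p:ℝ) ≤ a
        · refine ⟨p, a, b, hp2, hap, hbp, le_refl _, le_refl _, hab, ?_⟩
          nlinarith
        · push_neg at hap
          have hα : 0 < 1/(p:ℝ) - a := by linarith
          have hβ : 0 < b - 1/(p:ℝ) := by linarith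
          by_cases hgrow : (6/5:ℝ)*(b-a) ≤ ((p:ℝ)+1)*(1/(p:ℝ) - a)
          · refine ⟨p+1, a, 1/(p:ℝ), by omega, ?_, ?_, le_refl _, hpb.le, hap, ?_⟩
            · push_cast; exact hap1
            · push_cast; ring_nf; exact le_refl _
            · push_cast; exact hgrow
          · push_neg at hgrow
            refine ⟨p, 1/(p:ℝ), b, hp2, le_refl _, hbp, hap.le, le_refl _, hpb, ?_⟩
            nlinarith [mul_nonneg (sub_nonneg.2 hP2) hβ.le, mul_nonneg (sub_nonneg.2 hP2) hα.le]
      obtain ⟨r, a', b', hr2, hra, hrb, haa, hbb, hab', hg⟩ := hsel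
      have hR2 : (2:ℝ) ≤ (r:ℝ) := by exact_mod_cast hr2
      have hr0 : (0:ℝ) < r := by linarith
      have hrm : (0:ℝ) < (r:ℝ) - 1 := by linarith
      set a₁ := (r:ℝ)*a' - 1 with ha₁def
      set b₁ := (r:ℝ)*b' - 1 with hb₁def
      have h0a₁ : 0 ≤ a₁ := by
        have : (r:ℝ)*(1/(r:ℝ)) ≤ (r:ℝ)*a' := mul_le_mul_of_nonneg_left hra hr0.le
        rw [mul_one_div_cancel hr0.ne'] at this
        simp only [ha₁def]; linarith
      have hb₁1 : b₁ ≤ 1 := by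
        have h1 : (r:ℝ)*b' ≤ (r:ℝ)*(1/((r:ℝ)-1)) := mul_le_mul_of_nonneg_left hrb hr0.le
        have h2 : (r:ℝ)*(1/((r:ℝ)-1)) ≤ 2 := by
          rw [mul_one_div, div_le_iff₀ hrm]; linarith
        simp only [hb₁def]; linarith
      have hab₁ : a₁ < b₁ := by
        simp only [ha₁def, hb₁def]
        have := mul_lt_mul_of_pos_left hab' hr0
        linarith
      have hmeas : 1 ≤ (6/5:ℝ)^n * (b₁ - a₁) := by
        have hd : b₁ - a₁ = (r:ℝ)*(b'-a') := by simp only [ha₁def, hb₁def]; ring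
        have hpn : (0:ℝ) < (6/5:ℝ)^n := by positivity
        calc (1:ℝ) ≤ (6/5:ℝ)^(n+1) * (b - a) := h1
          _ = (6/5:ℝ)^n * ((6/5:ℝ)*(b-a)) := by ring
          _ ≤ (6/5:ℝ)^n * ((r:ℝ)*(b'-a')) := mul_le_mul_of_nonneg_left hg hpn.le
          _ = (6/5:ℝ)^n * (b₁ - a₁) := by rw [hd]
      obtain ⟨m₁, q, hq, H⟩ := ih a₁ b₁ h0a₁ hab₁ hb₁1 hmeas
      refine ⟨m₁ + 1, q, hq, ?_⟩
      intro u v hu huv hv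
      obtain ⟨J₁, hJ₁o, hJ₁ne, hJ₁sub, hJ₁prop⟩ := H u v hu huv hv
      refine ⟨Ioo a' b' ∩ (fun x => (r:ℝ)*x - 1) ⁻¹' J₁, ?_, ?_, ?_, ?_⟩
      · exact isOpen_Ioo.inter (hJ₁o.preimage ((continuous_const.mul continuous_id).sub continuous_const))
      · obtain ⟨y, hy⟩ := hJ₁ne
        have hy₁ : y ∈ Ioo a₁ b₁ := hJ₁sub hy
        refine ⟨(y+1)/(r:ℝ), ⟨⟨?_, ?_⟩, ?_⟩⟩
        · rw [lt_div_iff₀ hr0]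
          have := hy₁.1; simp only [ha₁def] at this; linarith
        · rw [div_lt_iff₀ hr0]
          have := hy₁.2; simp only [hb₁def] at this; linarith
        · show (r:ℝ) * ((y+1)/(r:ℝ)) - 1 ∈ J₁
          rw [mul_div_cancel₀ _ hr0.ne']
          simpa using hy
      · exact (inter_subset_left).trans (Ioo_subset_Ioo haa hbb)
      · rintro x ⟨hx1, hx2⟩
        have hTx : engelT x = (r:ℝ)*x - 1 :=
          engelT_branch hr2 (lt_of_le_of_lt hra hx1.1) (lt_of_lt_of_le hx1.2 hrb)
        rw [Function.iterate_succ_apply, hTx]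
        exact hJ₁prop _ hx2

lemma expansion' {a b : ℝ} (ha : 0 ≤ a) (hab : a < b) (hb : b ≤ 1) :
    ∃ (m q : ℕ), 2 ≤ q ∧ ∀ u v : ℝ, 1/((q:ℝ)+1) ≤ u → u < v → v ≤ 1/(q:ℝ) →
      ∃ J : Set ℝ, IsOpen J ∧ J.Nonempty ∧ J ⊆ Set.Ioo a b ∧
        ∀ x ∈ J, engelT^[m] x ∈ Set.Ioo u v := by
  have hd : 0 < b - a := by linarith
  obtain ⟨n, hn⟩ := pow_unbounded_of_one_lt (1/(b-a)) (by norm_num : (1:ℝ) < 6/5)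
  apply expansion n a b ha hab hb
  rw [← div_le_iff₀ hd]
  exact hn.le

lemma mainKey (k : ℕ) {a b : ℝ} (ha : 0 ≤ a) (hab : a < b) (hb : b ≤ 1) (N : ℝ) :
    ∃ J : Set ℝ, IsOpen J ∧ J.Nonempty ∧ J ⊆ Set.Ioo a b ∧
      ∃ M : ℕ, ∀ x ∈ J, N < ∑ n ∈ Finset.range M, ((engelDigit (n+1) x : ℝ))^(-(k:ℝ)) := by
  obtain ⟨m, q, hq, H⟩ := expansion' ha hab hb
  have hQ : (2:ℝ) ≤ (q:ℝ) := by exact_mod_cast hq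
  have hQ0 : (0:ℝ) < q := by linarith
  have hQ1 : (0:ℝ) < (q:ℝ) + 1 := by linarith
  set c : ℝ := (((q:ℝ)+1)^k)⁻¹ with hc
  have hc0 : 0 < c := by positivity
  obtain ⟨M₀, hM₀⟩ := exists_nat_gt (N * ((q:ℝ)+1)^k)
  set u : ℝ := 1/(q:ℝ) - (1/((q:ℝ)+1))^M₀ * (1/((q:ℝ)*((q:ℝ)+1))) with hu_def
  have hid : 1/((q:ℝ)+1) = 1/(q:ℝ) - 1/((q:ℝ)*((q:ℝ)+1)) := by field_simp; ring
  have hpowle : (1/((q:ℝ)+1))^M₀ ≤ 1 := by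
    apply pow_le_one₀ (by positivity)
    rw [div_le_one hQ1]; linarith
  have hpow0 : 0 < (1/((q:ℝ)+1))^M₀ := by positivity
  have hβ : (0:ℝ) < 1/((q:ℝ)*((q:ℝ)+1)) := by positivity
  have hu1 : 1/((q:ℝ)+1) ≤ u := by rw [hid, hu_def]; nlinarith
  have huv : u < 1/(q:ℝ) := by rw [hu_def]; nlinarith
  obtain ⟨J, hJo, hJne, hJsub, hJprop⟩ := H u (1/(q:ℝ)) hu1 huv le_rfl
  refine ⟨J, hJo, hJne, hJsub, m + M₀, ?_⟩
  intro x hxJ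
  have hx01 : x ∈ Ioo (0:ℝ) 1 := by
    have := hJsub hxJ
    exact ⟨lt_of_le_of_lt ha this.1, lt_of_lt_of_le this.2 hb⟩
  have hTm : engelT^[m] x ∈ Ioo u (1/(q:ℝ)) := hJprop x hxJ
  have hstay : ∀ i ≤ M₀, engelT^[i] (engelT^[m] x) ∈ Ioo (1/((q:ℝ)+1)) (1/(q:ℝ)) :=
    engelT_stay hq M₀ _ hTm.1 hTm.2
  -- bounds on iterates
  have hiter : ∀ n < m + M₀, 1/((q:ℝ)+1) < engelT^[n] x ∧ engelT^[n] x < 1 := by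
    intro n hn
    rcases le_or_gt m n with hmn | hmn
    · have hi : n - m ≤ M₀ := by omega
      have := hstay (n - m) hi
      rw [← Function.iterate_add_apply] at this
      have hn' : n - m + m = n := by omega
      rw [hn'] at this
      refine ⟨this.1, lt_of_lt_of_le this.2 ?_⟩
      rw [div_le_one hQ0]; linarith
    · have hu0 : (0:ℝ) < u := lt_of_lt_of_le (by positivity) hu1
      have hpos : 0 < engelT^[m] x := lt_trans hu0 hTm.1
      have horb := engelT_orbit m x hx01 hpos n hmn.le
      refine ⟨?_, horb.2⟩
      calc 1/((q:ℝ)+1) ≤ u := hu1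
        _ < engelT^[m] x := hTm.1
        _ ≤ engelT^[n] x := horb.1
  -- each digit term is at least c
  have hterm : ∀ n < m + M₀, c ≤ ((engelDigit (n+1) x : ℝ))^(-(k:ℝ)) := by
    intro n hn
    obtain ⟨hlo, hhi⟩ := hiter n hn
    set y := engelT^[n] x with hy
    have hy0 : 0 < y := lt_trans (by positivity) hlo
    have hinv0 : 0 < y⁻¹ := by positivity
    have hinvq : y⁻¹ < (q:ℝ)+1 := by
      rw [← one_div]
      calc 1/y < 1/(1/((q:ℝ)+1)) := one_div_lt_one_div_of_lt (by positivity) hlo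
        _ = (q:ℝ)+1 := one_div_one_div _
    have hdig : engelDigit (n+1) x = ⌈y⁻¹⌉₊ := by
      simp only [engelDigit, Nat.add_sub_cancel, hy]
    have hd1 : 1 ≤ engelDigit (n+1) x := by
      rw [hdig]
      exact Nat.ceil_pos.mpr hinv0
    have hdq : ((engelDigit (n+1) x : ℝ)) ≤ (q:ℝ)+1 := by
      rw [hdig]
      have h1 : (⌈y⁻¹⌉₊ : ℕ) ≤ q + 1 := Nat.ceil_le.mpr (by push_cast; linarith)
      calc ((⌈y⁻¹⌉₊:ℕ):ℝ) ≤ ((q+1:ℕ):ℝ) := by exact_mod_cast h1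
        _ = (q:ℝ)+1 := by push_cast; ring
    have hd1' : (1:ℝ) ≤ ((engelDigit (n+1) x : ℝ)) := by exact_mod_cast hd1
    have hrpow : ((engelDigit (n+1) x : ℝ))^(-(k:ℝ)) = (((engelDigit (n+1) x : ℝ))^k)⁻¹ := by
      rw [Real.rpow_neg (by linarith), Real.rpow_natCast]
    rw [hrpow, hc]
    apply inv_anti₀ (by positivity)
    exact pow_le_pow_left₀ (by linarith) hdq k
  -- conclude
  have hsum : (↑(m + M₀) : ℝ) * c ≤ ∑ n ∈ Finset.range (m + M₀), ((engelDigit (n+1) x : ℝ))^(-(k:ℝ)) := by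
    calc (↑(m + M₀) : ℝ) * c = ∑ _n ∈ Finset.range (m + M₀), c := by
          rw [Finset.sum_const, Finset.card_range, nsmul_eq_mul]
      _ ≤ _ := Finset.sum_le_sum (fun n hn => hterm n (Finset.mem_range.mp hn))
  have hNlt : N < (↑(m + M₀) : ℝ) * c := by
    have h1 : N * (((q:ℝ)+1)^k) * c < (M₀:ℝ) * c := by
      apply mul_lt_mul_of_pos_right hM₀ hc0
    have h2 : N * (((q:ℝ)+1)^k) * c = N := by
      rw [hc]; field_simp
    have h3 : (M₀:ℝ) ≤ (↑(m + M₀):ℝ) := by exact_mod_cast Nat.le_add_left M₀ m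
    nlinarith
  linarith

lemma isNowhereDense_of_forall {X : Type*} [TopologicalSpace X] {s : Set X}
    (h : ∀ U : Set X, IsOpen U → U.Nonempty → ∃ V, IsOpen V ∧ V.Nonempty ∧ V ⊆ U ∧ V ∩ s = ∅) :
    IsNowhereDense s := by
  rw [IsNowhereDense]
  refine Set.eq_empty_iff_forall_notMem.mpr fun x hx => ?_
  obtain ⟨V, hVo, ⟨v, hv⟩, hVU, hVs⟩ := h _ isOpen_interior ⟨x, hx⟩
  have hvc : v ∈ closure s := interior_subset (hVU hv)
  have hne := (mem_closure_iff.mp hvc) V hVo hv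
  rw [hVs] at hne
  exact Set.not_nonempty_empty hne

/-- For every `α ∈ [0,∞)`, the set `{x ∈ (0,1) : λ(x) ≤ α}` is meagre
in `(0,1)`. -/
theorem engelLambda_le_isMeagre (α : ℝ≥0∞) (htop : α ≠ ⊤) :
    IsMeagre {x : Set.Ioo (0 : ℝ) 1 | engelLambda (x : ℝ) ≤ α} := by
  obtain ⟨k, hk⟩ := ENNReal.exists_nat_gt htop
  have hk1 : 1 ≤ k := by
    rcases Nat.eq_zero_or_pos k with rfl | h
    · exact absurd hk (by simp)
    · exact h
  have hk0 : (0:ℝ) < k := by exact_mod_cast hk1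
  set E : ℕ → Set ↥(Set.Ioo (0:ℝ) 1) := fun N =>
    {x | ∀ M : ℕ, ∑ n ∈ Finset.range M, ((engelDigit (n+1) (x:ℝ) : ℝ))^(-(k:ℝ)) ≤ N} with hE
  have hnonneg : ∀ (x : ℝ) (n : ℕ), 0 ≤ ((engelDigit (n+1) x : ℝ))^(-(k:ℝ)) :=
    fun x n => Real.rpow_nonneg (Nat.cast_nonneg _) _
  have hsub : {x : Set.Ioo (0:ℝ) 1 | engelLambda (x:ℝ) ≤ α} ⊆ ⋃ N : ℕ, E N := by
    intro x hx
    have hlt : engelLambda (x:ℝ) < (k:ℝ≥0∞) := lt_of_le_of_lt hx hk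
    rw [engelLambda] at hlt
    obtain ⟨t, ht, htk⟩ := sInf_lt_iff.mp hlt
    obtain ⟨s, ⟨hs0, hsum⟩, rfl⟩ := ht
    have hsk : s < k := by
      rw [show ((k:ℕ):ℝ≥0∞) = ENNReal.ofReal (k:ℝ) by rw [ENNReal.ofReal_natCast]] at htk
      exact (ENNReal.ofReal_lt_ofReal_iff_of_nonneg hs0).mp htk
    have hsumk : Summable (fun n : ℕ => ((engelDigit (n+1) (x:ℝ) : ℝ))^(-(k:ℝ))) := by
      apply Summable.of_nonneg_of_le (fun n => hnonneg _ n) ?_ hsum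
      intro n
      rcases Nat.eq_zero_or_pos (engelDigit (n+1) (x:ℝ)) with h0 | h1
      · rw [h0]
        push_cast
        rw [Real.zero_rpow (by linarith : -(k:ℝ) ≠ 0)]
        exact Real.rpow_nonneg le_rfl _
      · have h1' : (1:ℝ) ≤ (engelDigit (n+1) (x:ℝ) : ℝ) := by exact_mod_cast h1
        exact Real.rpow_le_rpow_of_exponent_le h1' (by linarith)
    obtain ⟨N, hN⟩ := exists_nat_ge (∑' n, ((engelDigit (n+1) (x:ℝ) : ℝ))^(-(k:ℝ)))
    refine mem_iUnion.2 ⟨N, fun M => ?_⟩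
    exact le_trans (Summable.sum_le_tsum _ (fun n _ => hnonneg _ n) hsumk) hN
  refine IsMeagre.mono hsub ?_
  apply isMeagre_iUnion
  intro N
  rw [isMeagre_iff_countable_union_isNowhereDense]
  refine ⟨{E N}, ?_, countable_singleton _, by simp⟩
  rintro t rfl0
  rw [mem_singleton_iff] at rfl0
  subst rfl0
  apply isNowhereDense_of_forall
  intro U hU hUne
  obtain ⟨u, hu⟩ := hUne
  obtain ⟨W, hW, hWU⟩ := isOpen_induced_iff.mp hU
  have huW : (u:ℝ) ∈ W := by rw [← hWU] at hu; exact hu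
  obtain ⟨ε, hε, hball⟩ := Metric.isOpen_iff.mp hW _ huW
  set a : ℝ := max ((u:ℝ) - ε) 0 with hadef
  set b : ℝ := min ((u:ℝ) + ε) 1 with hbdef
  have hu01 := u.2
  have hau : a < (u:ℝ) := max_lt (by linarith) hu01.1
  have hub : (u:ℝ) < b := lt_min (by linarith) hu01.2
  have hab : a < b := lt_trans hau hub
  have ha0 : 0 ≤ a := le_max_right _ _
  have hb1 : b ≤ 1 := min_le_right _ _
  have hIooW : Ioo a b ⊆ W := by
    intro y hy
    apply hball
    rw [Real.ball_eq_Ioo]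
    constructor
    · calc (u:ℝ) - ε ≤ a := le_max_left _ _
        _ < y := hy.1
    · calc y < b := hy.2
        _ ≤ (u:ℝ) + ε := min_le_left _ _
  obtain ⟨J, hJo, hJne, hJsub, M, hJM⟩ := mainKey k ha0 hab hb1 (N:ℝ)
  have hJ01 : J ⊆ Ioo (0:ℝ) 1 := hJsub.trans (Ioo_subset_Ioo ha0 hb1)
  refine ⟨Subtype.val ⁻¹' J, hJo.preimage continuous_subtype_val, ?_, ?_, ?_⟩
  · obtain ⟨j, hj⟩ := hJne
    exact ⟨⟨j, hJ01 hj⟩, hj⟩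
  · intro y hy
    rw [← hWU]
    exact hIooW (hJsub hy)
  · rw [Set.eq_empty_iff_forall_notMem]
    rintro y ⟨hyV, hyE⟩
    have h1 := hyE M
    have h2 := hJM (y:ℝ) hyV
    linarith
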